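/- Let $G$ be a topological abelian semigroup acting continuously on a compact metric space $X$, and suppose $y \in X$ is a Bohr almost periodic point with $X = \mathrm{cls}_X G(y)$. Then the action $G \curvearrowright X$ is uniquely ergodic: there is exactly one $G$-invariant Borel probability measure on $X$. -/

import Mathlib

set_option linter.unusedSectionVars false

open MeasureTheory MulAction Set Pointwise

/-- A point `y` is Bohr almost periodic for the action of `G` on `X`. -/
def IsBohrAlmostPeriodicPt {G X : Type*} [Monoid G] [TopologicalSpace G]
    [MetricSpace X] [MulAction G X] (y : X) : Prop :=
  ∀ ε > (0 : ℝ), ∃ L : Set G, IsCompact L ∧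
    {τ : G | ∀ g : G, dist (g • y) ((τ * g) • y) < ε} * L = Set.univ

namespace BohrUE

variable {G X : Type*} [CommMonoid G] [TopologicalSpace G]
  [MetricSpace X] [CompactSpace X] [MulAction G X] [ContinuousSMul G X]

/-- On the closure of the orbit, elements of `S ε` move every point by at most `ε`. -/
lemma dist_smul_self_le (y : X) (hd : Dense (MulAction.orbit G y)) {ε : ℝ} {σ : G}
    (hσ : ∀ g : G, dist (g • y) ((σ * g) • y) < ε) (x : X) : dist x (σ • x) ≤ ε := by
  have hcl : IsClosed {x : X | dist x (σ • x) ≤ ε} :=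
    isClosed_le (continuous_id.dist (continuous_const_smul σ)) continuous_const
  have horb : MulAction.orbit G y ⊆ {x : X | dist x (σ • x) ≤ ε} := by
    rintro x ⟨g, rfl⟩
    show dist (g • y) (σ • g • y) ≤ ε
    rw [← mul_smul]
    exact (hσ g).le
  exact closure_minimal horb hcl (hd x)

/-- Uniform equicontinuity of the maps `x ↦ ℓ • x` for `ℓ` in a compact set. -/
lemma compact_equicontinuous {L : Set G} (hL : IsCompact L) {ε : ℝ} (hε : 0 < ε) :
    ∃ δ > 0, ∀ ℓ ∈ L, ∀ a b : X, dist a b < δ → dist (ℓ • a) (ℓ • b) < ε := by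
  by_contra hcon
  push_neg at hcon
  have h' : ∀ n : ℕ, ∃ ℓ ∈ L, ∃ a b : X,
      dist a b < 1 / (n + 1) ∧ ε ≤ dist (ℓ • a) (ℓ • b) := by
    intro n
    obtain ⟨ℓ, hℓ, a, b, h1, h2⟩ := hcon (1 / (n + 1)) (by positivity)
    exact ⟨ℓ, hℓ, a, b, h1, h2⟩
  choose ℓ hℓ a b hab hge using h'
  set x : ℕ → G × X × X := fun n => (ℓ n, a n, b n) with hx
  have hcomp : IsCompact (L ×ˢ ((univ : Set X) ×ˢ (univ : Set X))) :=
    hL.prod (isCompact_univ.prod isCompact_univ)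
  have hle : Filter.map x Filter.atTop ≤ Filter.principal (L ×ˢ ((univ : Set X) ×ˢ (univ : Set X))) := by
    rw [Filter.le_principal_iff]
    exact Filter.mem_map.mpr (Filter.Eventually.of_forall fun n => ⟨hℓ n, trivial, trivial⟩)
  obtain ⟨p, hpmem, hp⟩ := hcomp.exists_clusterPt hle
  have mem_of_closed : ∀ {C : Set (G × X × X)}, IsClosed C →
      (∀ᶠ n in Filter.atTop, x n ∈ C) → p ∈ C := by
    intro C hC hev
    have : ClusterPt p (Filter.principal C) :=
      hp.mono (Filter.le_principal_iff.mpr hev)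
    rw [← hC.closure_eq]
    exact mem_closure_iff_clusterPt.mpr this
  have h1 : ∀ N : ℕ, dist p.2.1 p.2.2 ≤ 1 / (N + 1) := by
    intro N
    refine mem_of_closed (C := {q : G × X × X | dist q.2.1 q.2.2 ≤ 1 / (N + 1)})
      (isClosed_le ((continuous_snd.fst).dist (continuous_snd.snd)) continuous_const) ?_
    filter_upwards [Filter.eventually_ge_atTop N] with n hn
    refine le_trans (hab n).le ?_
    apply one_div_le_one_div_of_le (by positivity)
    exact_mod_cast (by omega : N + 1 ≤ n + 1)
  have hdist0 : dist p.2.1 p.2.2 ≤ 0 :=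
    ge_of_tendsto' tendsto_one_div_add_atTop_nhds_zero_nat h1
  have heq : p.2.1 = p.2.2 := by
    have := dist_nonneg (x := p.2.1) (y := p.2.2)
    exact eq_of_dist_eq_zero (le_antisymm hdist0 this)
  have h2 : ε ≤ dist (p.1 • p.2.1) (p.1 • p.2.2) := by
    refine mem_of_closed (C := {q : G × X × X | ε ≤ dist (q.1 • q.2.1) (q.1 • q.2.2)})
      (isClosed_le continuous_const
        ((continuous_fst.smul continuous_snd.fst).dist
          (continuous_fst.smul continuous_snd.snd))) ?_
    exact Filter.Eventually.of_forall fun n => hge n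
  rw [heq] at h2
  simp at h2
  linarith

/-- Uniform equicontinuity of the whole action. -/
lemma key (y : X) (hy : IsBohrAlmostPeriodicPt (G := G) y)
    (hd : Dense (MulAction.orbit G y)) {ε : ℝ} (hε : 0 < ε) :
    ∃ δ > 0, ∀ (g : G) (a b : X), dist a b < δ → dist (g • a) (g • b) < ε := by
  obtain ⟨L, hL, hSL⟩ := hy (ε / 3) (by positivity)
  obtain ⟨δ, hδ, hLe⟩ := compact_equicontinuous (X := X) hL (show (0:ℝ) < ε / 3 by positivity)
  refine ⟨δ, hδ, fun g a b hab => ?_⟩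
  have hg : g ∈ {τ : G | ∀ g : G, dist (g • y) ((τ * g) • y) < ε / 3} * L := by
    rw [hSL]; trivial
  obtain ⟨σ, hσ, ℓ, hℓ, rfl⟩ := hg
  have hσ' : ∀ x : X, dist x (σ • x) ≤ ε / 3 := dist_smul_self_le y hd hσ
  have hmid : dist (ℓ • a) (ℓ • b) < ε / 3 := hLe ℓ hℓ a b hab
  have h4 : dist ((σ * ℓ) • a) ((σ * ℓ) • b)
      ≤ dist (σ • ℓ • a) (ℓ • a) + dist (ℓ • a) (ℓ • b) + dist (ℓ • b) (σ • ℓ • b) := by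
    rw [mul_smul, mul_smul]
    exact dist_triangle4 _ _ _ _
  have ha' : dist (σ • ℓ • a) (ℓ • a) ≤ ε / 3 := by
    rw [dist_comm]; exact hσ' _
  have hb' : dist (ℓ • b) (σ • ℓ • b) ≤ ε / 3 := hσ' _
  linarith

/-- Transfer of closeness on the orbit of `y` to closeness everywhere. -/
lemma transfer (y : X) (hy : IsBohrAlmostPeriodicPt (G := G) y)
    (hd : Dense (MulAction.orbit G y)) {ε : ℝ} (hε : 0 < ε) :
    ∃ δ > 0, ∀ g g' : G, dist (g • y) (g' • y) < δ →
      ∀ v : X, dist (g • v) (g' • v) ≤ ε := by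
  obtain ⟨δ, hδ, hk⟩ := key y hy hd hε
  refine ⟨δ, hδ, fun g g' h v => ?_⟩
  have hcl : IsClosed {v : X | dist (g • v) (g' • v) ≤ ε} :=
    isClosed_le ((continuous_const_smul g).dist (continuous_const_smul g')) continuous_const
  refine closure_minimal ?_ hcl (hd v)
  rintro x ⟨h', rfl⟩
  show dist (g • h' • y) (g' • h' • y) ≤ ε
  have h1 : dist (h' • g • y) (h' • g' • y) < ε := hk h' _ _ h
  rw [← mul_smul, ← mul_smul, mul_comm h' g, mul_comm h' g', mul_smul, mul_smul] at h1
  exact h1.le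

lemma smul_ext (y : X) (hy : IsBohrAlmostPeriodicPt (G := G) y)
    (hd : Dense (MulAction.orbit G y)) {g g' : G} (h : g • y = g' • y) (v : X) :
    g • v = g' • v := by
  have hle : ∀ ε > (0:ℝ), dist (g • v) (g' • v) ≤ ε := by
    intro ε hε
    obtain ⟨δ, hδ, ht⟩ := transfer y hy hd hε
    exact ht g g' (by rw [h]; simpa using hδ) v
  have : dist (g • v) (g' • v) ≤ 0 := by
    by_contra hpos
    push_neg at hpos
    have := hle (dist (g • v) (g' • v) / 2) (by linarith)
    linarith
  exact eq_of_dist_eq_zero (le_antisymm this dist_nonneg)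

/-- The structure carrying the induced multiplication on `X`. -/
structure GoodMul (y : X) : Type _ where
  m : X → X → X
  cont : Continuous fun p : X × X => m p.1 p.2
  orbit_eq : ∀ (g : G) (v : X), m (g • y) v = g • v
  comm : ∀ u v, m u v = m v u
  assoc : ∀ u v w, m (m u v) w = m u (m v w)

lemma exists_goodMul (y : X) (hy : IsBohrAlmostPeriodicPt (G := G) y)
    (hd : Dense (MulAction.orbit G y)) : Nonempty (GoodMul (G := G) y) := by
  classical
  set s : Set (X × X) := (MulAction.orbit G y) ×ˢ (univ : Set X) with hs
  have hd2 : Dense s := hd.prod dense_univ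
  have h_e : IsUniformInducing (Subtype.val : s → X × X) :=
    isUniformEmbedding_subtype_val.isUniformInducing
  have h_dense : DenseRange (Subtype.val : s → X × X) := hd2.denseRange_val
  have hpick : ∀ p : s, ∃ g : G, g • y = (p : X × X).1 := fun p => p.2.1
  choose pk hpk using hpick
  set f : s → X := fun p => pk p • (p : X × X).2 with hf
  have h_f : UniformContinuous f := by
    rw [Metric.uniformContinuous_iff]
    intro ε hε
    obtain ⟨δ₁, hδ₁, hk⟩ := key y hy hd (show (0:ℝ) < ε / 2 by positivity)
    obtain ⟨δ₂, hδ₂, ht⟩ := transfer y hy hd (show (0:ℝ) < ε / 4 by positivity)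
    refine ⟨min δ₁ δ₂, by positivity, ?_⟩
    intro p q hpq
    rw [Subtype.dist_eq, Prod.dist_eq] at hpq
    have hA : dist (p : X × X).1 (q : X × X).1 < δ₂ :=
      lt_of_le_of_lt (le_max_left _ _) (lt_of_lt_of_le hpq (min_le_right _ _))
    have hB : dist (p : X × X).2 (q : X × X).2 < δ₁ :=
      lt_of_le_of_lt (le_max_right _ _) (lt_of_lt_of_le hpq (min_le_left _ _))
    have h1 : dist (pk p • (p : X × X).2) (pk p • (q : X × X).2) < ε / 2 :=
      hk (pk p) _ _ hB
    have h2 : dist (pk p • (q : X × X).2) (pk q • (q : X × X).2) ≤ ε / 4 := by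
      apply ht
      rw [hpk p, hpk q]
      exact hA
    calc dist (f p) (f q) ≤ dist (pk p • (p : X × X).2) (pk p • (q : X × X).2)
          + dist (pk p • (q : X × X).2) (pk q • (q : X × X).2) := dist_triangle _ _ _
      _ < ε := by linarith
  set M : X × X → X := IsDenseInducing.extend (h_e.isDenseInducing h_dense) f with hM
  have hMc : Continuous M :=
    (uniformContinuous_uniformly_extend h_e h_dense h_f).continuous
  have hMorbit : ∀ (g : G) (v : X), M (g • y, v) = g • v := by
    intro g v
    have hmem : ((g • y, v) : X × X) ∈ s := ⟨⟨g, rfl⟩, trivial⟩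
    have h1 : M ((⟨(g • y, v), hmem⟩ : s) : X × X) = f ⟨(g • y, v), hmem⟩ :=
      uniformly_extend_of_ind h_e h_dense h_f _
    have h2 : f ⟨(g • y, v), hmem⟩ = pk ⟨(g • y, v), hmem⟩ • v := rfl
    have h3 : pk ⟨(g • y, v), hmem⟩ • y = g • y := hpk ⟨(g • y, v), hmem⟩
    have h4 : pk ⟨(g • y, v), hmem⟩ • v = g • v := smul_ext y hy hd h3 v
    rw [h1, h2, h4]
  have hcomm : ∀ u v : X, M (u, v) = M (v, u) := by
    have heq : (fun p : X × X => M p) = fun p : X × X => M (p.2, p.1) := by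
      refine Continuous.ext_on (hd.prod hd) hMc
        (hMc.comp (continuous_snd.prodMk continuous_fst)) ?_
      rintro ⟨u, v⟩ ⟨⟨g, rfl⟩, ⟨h, rfl⟩⟩
      show M (g • y, h • y) = M (h • y, g • y)
      rw [hMorbit, hMorbit, ← mul_smul, ← mul_smul, mul_comm]
    intro u v
    exact congrFun heq (u, v)
  have hassoc : ∀ u v w : X, M (M (u, v), w) = M (u, M (v, w)) := by
    have heq : (fun p : X × X × X => M (M (p.1, p.2.1), p.2.2))
        = fun p : X × X × X => M (p.1, M (p.2.1, p.2.2)) := by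
      refine Continuous.ext_on (hd.prod (hd.prod hd))
        (hMc.comp ((hMc.comp (continuous_fst.prodMk continuous_snd.fst)).prodMk
          continuous_snd.snd))
        (hMc.comp (continuous_fst.prodMk (hMc.comp
          (continuous_snd.fst.prodMk continuous_snd.snd)))) ?_
      rintro ⟨u, v, w⟩ ⟨⟨a, rfl⟩, ⟨b, rfl⟩, ⟨c, rfl⟩⟩
      show M (M (a • y, b • y), c • y) = M (a • y, M (b • y, c • y))
      rw [hMorbit, hMorbit, ← mul_smul, hMorbit, ← mul_smul, hMorbit,
        ← mul_smul, ← mul_smul, mul_assoc]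
    intro u v w
    exact congrFun heq (u, v, w)
  exact ⟨{ m := fun u v => M (u, v)
           cont := hMc
           orbit_eq := hMorbit
           comm := hcomm
           assoc := hassoc }⟩

section Measure

variable [MeasurableSpace X] [BorelSpace X]

lemma integral_eq_of_invariant (y : X) (hd : Dense (MulAction.orbit G y))
    (mm : GoodMul (G := G) y) {μ : Measure X} [IsProbabilityMeasure μ]
    (hμ : ∀ g : G, Measure.map (fun x => g • x) μ = μ)
    {F : X → ℝ} (hF : Continuous F) (v : X) :
    ∫ u, F (mm.m u v) ∂μ = ∫ u, F u ∂μ := by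
  classical
  obtain ⟨C, hC⟩ : ∃ C : ℝ, ∀ x : X, ‖F x‖ ≤ C := by
    rcases isEmpty_or_nonempty X with hX | hX
    · exact ⟨0, fun x => (IsEmpty.false x).elim⟩
    · set Fb := BoundedContinuousFunction.mkOfCompact ⟨F, hF⟩ with hFb
      exact ⟨‖Fb‖, fun x => Fb.norm_coe_le_norm x⟩
  have hm1 : ∀ v : X, Continuous fun u => mm.m u v := by
    intro v
    exact mm.cont.comp (continuous_id.prodMk continuous_const)
  have hm2 : ∀ u : X, Continuous fun v => mm.m u v := by
    intro u
    exact mm.cont.comp (continuous_const.prodMk continuous_id)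
  have hA_cont : Continuous fun v => ∫ u, F (mm.m u v) ∂μ := by
    apply MeasureTheory.continuous_of_dominated (bound := fun _ => C)
    · exact fun v => (hF.comp (hm1 v)).aestronglyMeasurable
    · exact fun v => Filter.Eventually.of_forall fun u => hC _
    · exact integrable_const C
    · exact Filter.Eventually.of_forall fun u => hF.comp (hm2 u)
  have hA_orbit : ∀ g : G, ∫ u, F (mm.m u (g • y)) ∂μ = ∫ u, F u ∂μ := by
    intro g
    have h1 : ∀ u : X, mm.m u (g • y) = g • u := by
      intro u; rw [mm.comm, mm.orbit_eq]
    simp_rw [h1]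
    have hmeas : AEMeasurable (fun x : X => g • x) μ :=
      (continuous_const_smul g).aemeasurable
    calc ∫ u, F (g • u) ∂μ = ∫ x, F x ∂(Measure.map (fun x => g • x) μ) :=
          (integral_map hmeas hF.aestronglyMeasurable).symm
      _ = ∫ u, F u ∂μ := by rw [hμ g]
  have heq : (fun v => ∫ u, F (mm.m u v) ∂μ) = fun _ => ∫ u, F u ∂μ := by
    refine Continuous.ext_on hd hA_cont continuous_const ?_
    rintro v ⟨g, rfl⟩
    exact hA_orbit g
  exact congrFun heq v

lemma measure_eq_of_invariant (y : X) (hd : Dense (MulAction.orbit G y))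
    (mm : GoodMul (G := G) y) {μ ν : Measure X}
    [IsProbabilityMeasure μ] [IsProbabilityMeasure ν]
    (hμ : ∀ g : G, Measure.map (fun x => g • x) μ = μ)
    (hν : ∀ g : G, Measure.map (fun x => g • x) ν = ν) : μ = ν := by
  classical
  have hint_eq : ∀ F : X → ℝ, Continuous F → ∫ x, F x ∂μ = ∫ x, F x ∂ν := by
    intro F hF
    have hcont2 : Continuous fun p : X × X => F (mm.m p.1 p.2) := hF.comp mm.cont
    have hcont3 : Continuous fun p : X × X => F (mm.m p.2 p.1) :=
      hF.comp (mm.cont.comp (continuous_snd.prodMk continuous_fst))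
    have hint : Integrable (fun p : X × X => F (mm.m p.2 p.1)) (ν.prod μ) := by
      apply hcont3.integrable_of_hasCompactSupport
      exact IsCompact.of_isClosed_subset isCompact_univ (isClosed_tsupport _) (subset_univ _)
    have hswap := MeasureTheory.integral_integral_swap
      (f := fun (v : X) (u : X) => F (mm.m u v)) (μ := ν) (ν := μ) (by exact hint)
    -- ∫ v, ∫ u, F (m u v) ∂μ ∂ν = ∫ u, ∫ v, F (m u v) ∂ν ∂μ
    have hL : ∫ v, ∫ u, F (mm.m u v) ∂μ ∂ν = ∫ x, F x ∂μ := by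
      have : ∀ v : X, ∫ u, F (mm.m u v) ∂μ = ∫ x, F x ∂μ :=
        integral_eq_of_invariant y hd mm hμ hF
      simp_rw [this]
      simp
    have hR : ∫ u, ∫ v, F (mm.m u v) ∂ν ∂μ = ∫ x, F x ∂ν := by
      have hin : ∀ u : X, ∫ v, F (mm.m u v) ∂ν = ∫ x, F x ∂ν := by
        intro u
        have h1 : ∀ v : X, mm.m u v = mm.m v u := fun v => mm.comm u v
        simp_rw [h1]
        exact integral_eq_of_invariant y hd mm hν hF u
      simp_rw [hin]
      simp
    rw [← hL, hswap, hR]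
  apply MeasureTheory.ext_of_forall_lintegral_eq_of_IsFiniteMeasure
  intro f
  have hInt1 : Integrable (fun x => (f x : ℝ)) μ := by
    apply Continuous.integrable_of_hasCompactSupport
    · exact NNReal.continuous_coe.comp f.continuous
    · exact IsCompact.of_isClosed_subset isCompact_univ (isClosed_tsupport _) (subset_univ _)
  have hInt2 : Integrable (fun x => (f x : ℝ)) ν := by
    apply Continuous.integrable_of_hasCompactSupport
    · exact NNReal.continuous_coe.comp f.continuous
    · exact IsCompact.of_isClosed_subset isCompact_univ (isClosed_tsupport _) (subset_univ _)
  rw [MeasureTheory.lintegral_coe_eq_integral _ hInt1,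
    MeasureTheory.lintegral_coe_eq_integral _ hInt2]
  congr 1
  exact hint_eq _ (NNReal.continuous_coe.comp f.continuous)

end Measure

lemma exists_invariant_measure [MeasurableSpace X] [BorelSpace X]
    (y : X) (hd : Dense (MulAction.orbit G y)) (mm : GoodMul (G := G) y) :
    ∃ μ : Measure X, IsProbabilityMeasure μ ∧
      ∀ g : G, Measure.map (fun x => g • x) μ = μ := by
  classical
  have hm1 : ∀ u : X, Continuous (mm.m u) := fun u =>
    mm.cont.comp (continuous_const.prodMk continuous_id)
  set K : Set X := ⋂ u : X, Set.range (mm.m u) with hK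
  have hKcomp_u : ∀ u : X, IsCompact (Set.range (mm.m u)) := fun u => isCompact_range (hm1 u)
  haveI : Nonempty X := ⟨y⟩
  have hdir : Directed (· ⊇ ·) fun u : X => Set.range (mm.m u) := by
    intro u v
    refine ⟨mm.m u v, ?_, ?_⟩
    · rintro _ ⟨w, rfl⟩
      exact ⟨mm.m v w, (mm.assoc u v w).symm⟩
    · rintro _ ⟨w, rfl⟩
      refine ⟨mm.m u w, ?_⟩
      calc mm.m v (mm.m u w) = mm.m (mm.m v u) w := (mm.assoc v u w).symm
        _ = mm.m (mm.m u v) w := by rw [mm.comm v u]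
  have hKne : K.Nonempty :=
    IsCompact.nonempty_iInter_of_directed_nonempty_isCompact_isClosed _ hdir
      (fun u => ⟨mm.m u y, Set.mem_range_self y⟩) hKcomp_u
      (fun u => (hKcomp_u u).isClosed)
  have hKideal : ∀ (w : X) {k : X}, k ∈ K → mm.m w k ∈ K := by
    intro w k hk
    rw [hK, Set.mem_iInter] at hk ⊢
    intro u
    obtain ⟨x, hx⟩ := hk u
    refine ⟨mm.m w x, ?_⟩
    calc mm.m u (mm.m w x) = mm.m (mm.m u w) x := (mm.assoc u w x).symm
      _ = mm.m (mm.m w u) x := by rw [mm.comm u w]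
      _ = mm.m w (mm.m u x) := mm.assoc w u x
      _ = mm.m w k := by rw [hx]
  have hKsurj : ∀ k ∈ K, ∀ k' ∈ K, ∃ x ∈ K, mm.m k x = k' := by
    intro k hk k' hk'
    have h1 : k' ∈ Set.range (mm.m (mm.m k k)) := by
      rw [hK, Set.mem_iInter] at hk'; exact hk' (mm.m k k)
    obtain ⟨z, hz⟩ := h1
    refine ⟨mm.m k z, ?_, ?_⟩
    · rw [mm.comm k z]; exact hKideal z hk
    · calc mm.m k (mm.m k z) = mm.m (mm.m k k) z := (mm.assoc k k z).symm
        _ = k' := hz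
  obtain ⟨k₀, hk₀⟩ := hKne
  obtain ⟨e, heK, he⟩ := hKsurj k₀ hk₀ k₀ hk₀
  have hident : ∀ k ∈ K, mm.m e k = k := by
    intro k hk
    obtain ⟨x, hxK, hx⟩ := hKsurj k₀ hk₀ k hk
    calc mm.m e k = mm.m e (mm.m k₀ x) := by rw [hx]
      _ = mm.m (mm.m e k₀) x := (mm.assoc e k₀ x).symm
      _ = mm.m (mm.m k₀ e) x := by rw [mm.comm e k₀]
      _ = mm.m k₀ x := by rw [he]
      _ = k := hx
  -- the compact abelian group structure on `K`
  let Kt : Type _ := {x : X // x ∈ K}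
  haveI : Nonempty Kt := ⟨⟨e, heK⟩⟩
  have hKcl : IsClosed K := isClosed_iInter fun u => (hKcomp_u u).isClosed
  have hKcp : IsCompact K :=
    IsCompact.of_isClosed_subset (hKcomp_u y) hKcl (Set.iInter_subset _ y)
  haveI : CompactSpace Kt := isCompact_iff_compactSpace.mp hKcp
  have hinv : ∀ a : Kt, ∃ x ∈ K, mm.m a.1 x = e := fun a => hKsurj a.1 a.2 e heK
  choose invf hinvK hinve using hinv
  letI : CommGroup Kt :=
    { mul := fun a b => ⟨mm.m a.1 b.1, hKideal a.1 b.2⟩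
      mul_assoc := fun a b c => Subtype.ext (mm.assoc _ _ _)
      one := ⟨e, heK⟩
      one_mul := fun a => Subtype.ext (hident a.1 a.2)
      mul_one := fun a => Subtype.ext
        (by show mm.m a.1 e = a.1; rw [mm.comm]; exact hident a.1 a.2)
      inv := fun a => ⟨invf a, hinvK a⟩
      inv_mul_cancel := fun a => Subtype.ext
        (by show mm.m (invf a) a.1 = e; rw [mm.comm]; exact hinve a)
      mul_comm := fun a b => Subtype.ext (mm.comm _ _) }
  have hmulc : Continuous fun p : Kt × Kt => p.1 * p.2 := by
    apply Continuous.subtype_mk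
    exact mm.cont.comp ((continuous_subtype_val.comp continuous_fst).prodMk
      (continuous_subtype_val.comp continuous_snd))
  haveI : ContinuousMul Kt := ⟨hmulc⟩
  -- continuity of inversion via compactness
  have hΓcl : IsClosed {p : Kt × Kt | p.1 * p.2 = 1} := isClosed_eq hmulc continuous_const
  haveI : CompactSpace {p : Kt × Kt // p.1 * p.2 = 1} :=
    isCompact_iff_compactSpace.mp hΓcl.isCompact
  let φ : {p : Kt × Kt // p.1 * p.2 = 1} ≃ Kt :=
    { toFun := fun p => p.1.1
      invFun := fun a => ⟨(a, a⁻¹), mul_inv_cancel a⟩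
      left_inv := by
        rintro ⟨⟨a, b⟩, hab⟩
        have hb : a⁻¹ = b := inv_eq_of_mul_eq_one_right hab
        apply Subtype.ext
        show ((a, a⁻¹) : Kt × Kt) = (a, b)
        rw [hb]
      right_inv := fun a => rfl }
  have hφc : Continuous φ := continuous_fst.comp continuous_subtype_val
  let homeo := Continuous.homeoOfEquivCompactToT2 (f := φ) hφc
  have hinvc : Continuous fun a : Kt => a⁻¹ := by
    have heq : (fun a : Kt => a⁻¹) = fun a => ((homeo.symm a : Kt × Kt)).2 := by
      funext a; rfl
    rw [heq]
    exact continuous_snd.comp (continuous_subtype_val.comp homeo.symm.continuous)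
  haveI : ContinuousInv Kt := ⟨hinvc⟩
  haveI : IsTopologicalGroup Kt := { }
  -- Haar measure
  let K₀ : TopologicalSpace.PositiveCompacts Kt :=
    ⟨⟨Set.univ, isCompact_univ⟩, by simpa using (Set.univ_nonempty : (Set.univ : Set Kt).Nonempty)⟩
  let μK : Measure Kt := Measure.haarMeasure K₀
  haveI : IsProbabilityMeasure μK :=
    ⟨Measure.haarMeasure_self (K₀ := K₀)⟩
  have hvalm : Measurable (Subtype.val : Kt → X) := measurable_subtype_coe
  refine ⟨μK.map (Subtype.val), Measure.isProbabilityMeasure_map hvalm.aemeasurable, ?_⟩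
  intro g
  let c : Kt := ⟨mm.m (g • y) e, hKideal _ heK⟩
  have hcomm_fun : (fun x : X => g • x) ∘ (Subtype.val : Kt → X)
      = (Subtype.val : Kt → X) ∘ (fun k : Kt => c * k) := by
    funext k
    show g • (k : X) = mm.m (mm.m (g • y) e) k.1
    rw [mm.assoc, hident k.1 k.2, mm.orbit_eq]
  have hg_meas : Measurable (fun x : X => g • x) := (continuous_const_smul g).measurable
  have hc_meas : Measurable (fun k : Kt => c * k) :=
    (hmulc.comp (continuous_const.prodMk continuous_id)).measurable
  calc Measure.map (fun x => g • x) (μK.map Subtype.val)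
      = Measure.map ((fun x : X => g • x) ∘ Subtype.val) μK :=
        Measure.map_map hg_meas hvalm
    _ = Measure.map ((Subtype.val : Kt → X) ∘ (fun k : Kt => c * k)) μK := by
        rw [hcomm_fun]
    _ = Measure.map (Subtype.val : Kt → X) (Measure.map (fun k : Kt => c * k) μK) :=
        (Measure.map_map hvalm hc_meas).symm
    _ = μK.map Subtype.val := by rw [MeasureTheory.map_mul_left_eq_self μK c]

end BohrUE

/-- An action of a topological abelian semigroup with a dense Bohr almost
periodic orbit is uniquely ergodic. -/
theorem uniquely_ergodic_of_bohr_almost_periodic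
    {G X : Type*} [CommMonoid G] [TopologicalSpace G] [ContinuousMul G]
    [MetricSpace X] [CompactSpace X] [MulAction G X] [ContinuousSMul G X]
    [MeasurableSpace X] [BorelSpace X]
    (y : X) (hy : IsBohrAlmostPeriodicPt (G := G) y)
    (hdense : closure (MulAction.orbit G y) = Set.univ) :
    ∃! μ : Measure X, IsProbabilityMeasure μ ∧
      ∀ g : G, Measure.map (fun x => g • x) μ = μ := by
  have hd : Dense (MulAction.orbit G y) := dense_iff_closure_eq.mpr hdense
  obtain ⟨mm⟩ := BohrUE.exists_goodMul y hy hd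
  obtain ⟨μ, hμp, hμinv⟩ := BohrUE.exists_invariant_measure y hd mm
  refine ⟨μ, ⟨hμp, hμinv⟩, ?_⟩
  rintro ν ⟨hνp, hνinv⟩
  haveI := hμp
  haveI := hνp
  exact BohrUE.measure_eq_of_invariant y hd mm hνinv hμinv
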